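/- (Quasi-best sparse approximation chunking) Let x ∈ ℓ²(Λ), ω ∈ [1,∞)^Λ weights, S ⊂ Λ with ω(S) ≤ s, and λ̃ ≥ 4s ≥ ‖ω‖∞². Partition S^c into consecutive blocks Ω₁, Ω₂, … obtained from the non-increasing rearrangement of (|x_k|/ω_k)_{k∈S^c}, where each Ω_j is maximal with ω(Ω_j) ≤ λ̃. Then each Ω_j is non-empty and finite, ∪_j Ω_j = S^c, and for every j ≥ 2: ‖x_{Ω_j}‖₂ ≤ (1/√λ̃)·‖x_{Ω_{j−1} ∪ Ω_j}‖_{1,ω}; consequently Σ_{j≥2} ‖x_{Ω_{j−1} ∪ Ω_j}‖_{1,ω} ≤ 2‖x‖_{1,ω}. -/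

import Mathlib

open scoped Classical

namespace Stmt18Aux

variable {Λ : Type*}

noncomputable def wsum (ω : Λ → ℝ) (l : List Λ) : ℝ := (l.map fun i => ω i ^ 2).sum

@[simp] lemma wsum_nil (ω : Λ → ℝ) : wsum ω ([] : List Λ) = 0 := rfl

@[simp] lemma wsum_cons (ω : Λ → ℝ) (a : Λ) (l : List Λ) :
    wsum ω (a :: l) = ω a ^ 2 + wsum ω l := by simp [wsum]

noncomputable def greedy (ω : Λ → ℝ) : ℝ → List Λ → List Λ × List Λ
  | _, [] => ([], [])
  | b, a :: l =>
    if ω a ^ 2 ≤ b then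
      (a :: (greedy ω (b - ω a ^ 2) l).1, (greedy ω (b - ω a ^ 2) l).2)
    else ([], a :: l)

lemma greedy_nil (ω : Λ → ℝ) (b : ℝ) : greedy ω b [] = ([], []) := by rw [greedy]

lemma greedy_cons_pos (ω : Λ → ℝ) {b : ℝ} {a : Λ} (l : List Λ) (h : ω a ^ 2 ≤ b) :
    greedy ω b (a :: l) =
      (a :: (greedy ω (b - ω a ^ 2) l).1, (greedy ω (b - ω a ^ 2) l).2) := by
  rw [greedy, if_pos h]

lemma greedy_cons_neg (ω : Λ → ℝ) {b : ℝ} {a : Λ} (l : List Λ) (h : ¬ ω a ^ 2 ≤ b) :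
    greedy ω b (a :: l) = ([], a :: l) := by
  rw [greedy, if_neg h]

lemma greedy_append (ω : Λ → ℝ) : ∀ (b : ℝ) (l : List Λ),
    (greedy ω b l).1 ++ (greedy ω b l).2 = l
  | b, [] => by simp [greedy_nil]
  | b, a :: l => by
    by_cases h : ω a ^ 2 ≤ b
    · rw [greedy_cons_pos ω l h]
      simpa using greedy_append ω (b - ω a ^ 2) l
    · rw [greedy_cons_neg ω l h]; simp

lemma greedy_snd_le (ω : Λ → ℝ) (b : ℝ) (l : List Λ) :
    (greedy ω b l).2.length ≤ l.length := by
  conv_rhs => rw [← greedy_append ω b l]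
  rw [List.length_append]
  omega

lemma greedy_snd_lt (ω : Λ → ℝ) {b : ℝ} {a : Λ} (l : List Λ) (h : ω a ^ 2 ≤ b) :
    (greedy ω b (a :: l)).2.length < (a :: l).length := by
  rw [greedy_cons_pos ω l h]
  simpa using Nat.lt_succ_of_le (greedy_snd_le ω (b - ω a ^ 2) l)

lemma greedy_wsum (ω : Λ → ℝ) : ∀ (b : ℝ) (l : List Λ),
    (greedy ω b l).1 = [] ∨ wsum ω (greedy ω b l).1 ≤ b
  | b, [] => Or.inl (by simp [greedy_nil])
  | b, a :: l => by
    by_cases h : ω a ^ 2 ≤ b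
    · rw [greedy_cons_pos ω l h]
      right
      rcases greedy_wsum ω (b - ω a ^ 2) l with h' | h'
      · simp [h', h]
      · simp only [wsum_cons]; linarith
    · rw [greedy_cons_neg ω l h]; left; rfl

lemma greedy_max (ω : Λ → ℝ) : ∀ (b : ℝ) (l : List Λ) {a : Λ} {r : List Λ},
    (greedy ω b l).2 = a :: r → b < wsum ω (greedy ω b l).1 + ω a ^ 2
  | b, [], a, r => by simp [greedy_nil]
  | b, a' :: l, a, r => by
    by_cases h : ω a' ^ 2 ≤ b
    · rw [greedy_cons_pos ω l h]
      intro hr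
      have := greedy_max ω (b - ω a' ^ 2) l hr
      simp only [wsum_cons]; linarith
    · rw [greedy_cons_neg ω l h]
      intro hr
      cases hr
      push_neg at h
      simpa using by linarith

noncomputable def chunks (ω : Λ → ℝ) (b : ℝ) : List Λ → List (List Λ)
  | [] => []
  | a :: l =>
    if h : ω a ^ 2 ≤ b then
      (greedy ω b (a :: l)).1 :: chunks ω b (greedy ω b (a :: l)).2
    else [a] :: chunks ω b l
  termination_by l => l.length
  decreasing_by
  · exact greedy_snd_lt ω l h
  · simp

lemma chunks_nil (ω : Λ → ℝ) (b : ℝ) : chunks ω b ([] : List Λ) = [] := by rw [chunks]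

lemma chunks_cons_pos (ω : Λ → ℝ) {b : ℝ} {a : Λ} (l : List Λ) (h : ω a ^ 2 ≤ b) :
    chunks ω b (a :: l) =
      (greedy ω b (a :: l)).1 :: chunks ω b (greedy ω b (a :: l)).2 := by
  rw [chunks, dif_pos h]

lemma chunks_join (ω : Λ → ℝ) (b : ℝ) : ∀ (n : ℕ) (l : List Λ), l.length ≤ n →
    (∀ i ∈ l, ω i ^ 2 ≤ b) → (chunks ω b l).flatten = l := by
  intro n
  induction n with
  | zero =>
    intro l hl _
    have : l = [] := List.eq_nil_of_length_eq_zero (Nat.le_zero.mp hl)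
    subst this; simp [chunks_nil]
  | succ n ih =>
    intro l hl hfit
    cases l with
    | nil => simp [chunks_nil]
    | cons a l =>
      have h : ω a ^ 2 ≤ b := hfit a (by simp)
      rw [chunks_cons_pos ω l h]
      have happ := greedy_append ω b (a :: l)
      have hr : (greedy ω b (a :: l)).2.length ≤ n := by
        have := greedy_snd_lt ω l h
        simp only [List.length_cons] at this hl; omega
      have hfit' : ∀ i ∈ (greedy ω b (a :: l)).2, ω i ^ 2 ≤ b := by
        intro i hi
        exact hfit i (by rw [← happ]; exact List.mem_append_right _ hi)
      rw [List.flatten_cons, ih _ hr hfit', happ]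

lemma chunks_ne_nil (ω : Λ → ℝ) (b : ℝ) : ∀ (n : ℕ) (l : List Λ), l.length ≤ n →
    ∀ c ∈ chunks ω b l, c ≠ [] := by
  intro n
  induction n with
  | zero =>
    intro l hl
    have : l = [] := List.eq_nil_of_length_eq_zero (Nat.le_zero.mp hl)
    subst this; simp [chunks_nil]
  | succ n ih =>
    intro l hl c hc
    cases l with
    | nil => rw [chunks_nil] at hc; simp at hc
    | cons a l =>
      by_cases h : ω a ^ 2 ≤ b
      · rw [chunks_cons_pos ω l h] at hc
        rcases List.mem_cons.mp hc with hc | hc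
        · subst hc
          rw [greedy_cons_pos ω l h]
          simp
        · have hr : (greedy ω b (a :: l)).2.length ≤ n := by
            have := greedy_snd_lt ω l h
            simp only [List.length_cons] at this hl; omega
          exact ih _ hr c hc
      · rw [chunks, dif_neg h] at hc
        rcases List.mem_cons.mp hc with hc | hc
        · subst hc; simp
        · exact ih l (by simp at hl; omega) c hc

lemma chunks_wsum (ω : Λ → ℝ) (b : ℝ) : ∀ (n : ℕ) (l : List Λ), l.length ≤ n →
    (∀ i ∈ l, ω i ^ 2 ≤ b) → ∀ c ∈ chunks ω b l, wsum ω c ≤ b := by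
  intro n
  induction n with
  | zero =>
    intro l hl _
    have : l = [] := List.eq_nil_of_length_eq_zero (Nat.le_zero.mp hl)
    subst this; simp [chunks_nil]
  | succ n ih =>
    intro l hl hfit c hc
    cases l with
    | nil => rw [chunks_nil] at hc; simp at hc
    | cons a l =>
      have h : ω a ^ 2 ≤ b := hfit a (by simp)
      rw [chunks_cons_pos ω l h] at hc
      have happ := greedy_append ω b (a :: l)
      rcases List.mem_cons.mp hc with hc | hc
      · subst hc
        rcases greedy_wsum ω b (a :: l) with h' | h'
        · rw [greedy_cons_pos ω l h] at h'; simp at h'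
        · exact h'
      · have hr : (greedy ω b (a :: l)).2.length ≤ n := by
          have := greedy_snd_lt ω l h
          simp only [List.length_cons] at this hl; omega
        have hfit' : ∀ i ∈ (greedy ω b (a :: l)).2, ω i ^ 2 ≤ b := by
          intro i hi
          exact hfit i (by rw [← happ]; exact List.mem_append_right _ hi)
        exact ih _ hr hfit' c hc

lemma chunks_chain' (ω : Λ → ℝ) (b : ℝ) : ∀ (n : ℕ) (l : List Λ), l.length ≤ n →
    (∀ i ∈ l, ω i ^ 2 ≤ b) →
    List.Chain' (fun c d => ∀ e ∈ d.head?, b < wsum ω c + ω e ^ 2) (chunks ω b l) := by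
  intro n
  induction n with
  | zero =>
    intro l hl _
    have : l = [] := List.eq_nil_of_length_eq_zero (Nat.le_zero.mp hl)
    subst this; simp [chunks_nil, List.Chain']
  | succ n ih =>
    intro l hl hfit
    cases l with
    | nil => simp [chunks_nil, List.Chain']
    | cons a l =>
      have h : ω a ^ 2 ≤ b := hfit a (by simp)
      rw [chunks_cons_pos ω l h]
      have happ := greedy_append ω b (a :: l)
      have hr : (greedy ω b (a :: l)).2.length ≤ n := by
        have := greedy_snd_lt ω l h
        simp only [List.length_cons] at this hl; omega
      have hfit' : ∀ i ∈ (greedy ω b (a :: l)).2, ω i ^ 2 ≤ b := by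
        intro i hi
        exact hfit i (by rw [← happ]; exact List.mem_append_right _ hi)
      unfold List.Chain'
      rw [List.isChain_cons]
      refine ⟨?_, ih _ hr hfit'⟩
      intro y hy e he
      rcases hr2 : (greedy ω b (a :: l)).2 with _ | ⟨a', r'⟩
      · rw [hr2, chunks_nil] at hy; simp at hy
      · have ha' : ω a' ^ 2 ≤ b := hfit' a' (by rw [hr2]; simp)
        rw [hr2, chunks_cons_pos ω r' ha'] at hy
        simp only [List.head?_cons, Option.mem_def, Option.some.injEq] at hy
        rw [greedy_cons_pos ω r' ha'] at hy
        have := greedy_max ω b (a :: l) hr2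
        subst hy
        simp only [List.head?_cons, Option.mem_def, Option.some.injEq] at he
        subst he
        exact this

end Stmt18Aux


/-- Quasi-best sparse approximation chunking: for `x ∈ ℓ²(Λ)` (`Λ` finite), `S ⊆ Λ` with
`ω(S) ≤ s`, and `λ̃ ≥ 4s ≥ ‖ω‖∞²`, the complement `Sᶜ` can be partitioned into consecutive
blocks `Ω₀, Ω₁, …, Ω_{K−1}` (from the non-increasing rearrangement of `|x_k|/ω_k`), each
non-empty with `ω(Ω_j) ≤ λ̃`, such that for every `j ≥ 1`:
`‖x_{Ω_j}‖₂ ≤ (1/√λ̃)·‖x_{Ω_{j−1} ∪ Ω_j}‖_{1,ω}`, and consequently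
`∑_{j≥1} ‖x_{Ω_{j−1} ∪ Ω_j}‖_{1,ω} ≤ 2‖x‖_{1,ω}`. -/
theorem stmt18 {Λ : Type*} [Fintype Λ] (ω : Λ → ℝ) (hω : ∀ i, 1 ≤ ω i)
    (x : Λ → ℂ) (S : Finset Λ) (s lam : ℝ)
    (hS : ∑ i ∈ S, ω i ^ 2 ≤ s)
    (hlam : 4 * s ≤ lam) (hωs : ∀ i, ω i ^ 2 ≤ 4 * s) :
    ∃ (K : ℕ) (Ω : ℕ → Finset Λ),
      (∀ j < K, (Ω j).Nonempty) ∧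
      (∀ j, K ≤ j → Ω j = ∅) ∧
      (∀ j j', j ≠ j' → Disjoint (Ω j) (Ω j')) ∧
      (Finset.range K).biUnion Ω = Sᶜ ∧
      (∀ j < K, ∑ i ∈ Ω j, ω i ^ 2 ≤ lam) ∧
      (∀ j, 1 ≤ j → j < K →
        Real.sqrt (∑ i ∈ Ω j, ‖x i‖ ^ 2) ≤
          1 / Real.sqrt lam * ∑ i ∈ Ω (j - 1) ∪ Ω j, ‖x i‖ * ω i) ∧
      (∑ j ∈ Finset.Ico 1 K, ∑ i ∈ Ω (j - 1) ∪ Ω j, ‖x i‖ * ω i ≤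
        2 * ∑ i, ‖x i‖ * ω i) := by
  classical
  set f : Λ → ℝ := fun i => ‖x i‖ / ω i with hf
  set R : Λ → Λ → Prop := fun a b => f b ≤ f a with hR
  haveI : DecidableRel R := fun a b => Classical.propDecidable _
  haveI : IsTotal Λ R := ⟨fun a b => le_total (f b) (f a)⟩
  haveI : IsTrans Λ R := ⟨fun a b c h h' => le_trans h' h⟩
  set l : List Λ := List.insertionSort R Sᶜ.toList with hldef
  have hperm : l.Perm Sᶜ.toList := List.perm_insertionSort R _
  have hnodup : l.Nodup := hperm.nodup_iff.mpr Sᶜ.nodup_toList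
  have hmeml : ∀ i, i ∈ l ↔ i ∈ Sᶜ := fun i => by
    rw [hperm.mem_iff, Finset.mem_toList]
  have hsortl : l.Pairwise R := List.pairwise_insertionSort R _
  have hω0 : ∀ i, 0 < ω i := fun i => lt_of_lt_of_le one_pos (hω i)
  have hxnn : ∀ i : Λ, 0 ≤ ‖x i‖ * ω i := fun i => mul_nonneg (norm_nonneg _) (hω0 i).le
  have hfit : ∀ i ∈ l, ω i ^ 2 ≤ lam := fun i _ => le_trans (hωs i) hlam
  set L : List (List Λ) := Stmt18Aux.chunks ω lam l with hLdef
  set K := L.length with hK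
  have hjoin : L.flatten = l := Stmt18Aux.chunks_join ω lam l.length l le_rfl hfit
  have hne : ∀ c ∈ L, c ≠ [] := Stmt18Aux.chunks_ne_nil ω lam l.length l le_rfl
  have hws : ∀ c ∈ L, Stmt18Aux.wsum ω c ≤ lam :=
    Stmt18Aux.chunks_wsum ω lam l.length l le_rfl hfit
  have hchain : List.Chain' (fun c d => ∀ e ∈ d.head?, lam < Stmt18Aux.wsum ω c + ω e ^ 2) L :=
    Stmt18Aux.chunks_chain' ω lam l.length l le_rfl hfit
  have hnodupL := List.nodup_flatten.mp (hjoin ▸ hnodup)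
  have hpairR := List.pairwise_flatten.mp (hjoin ▸ hsortl)
  set Ω : ℕ → Finset Λ := fun j => if h : j < K then (L.get ⟨j, h⟩).toFinset else ∅ with hΩ
  have hΩlt : ∀ (j) (h : j < K), Ω j = (L.get ⟨j, h⟩).toFinset := fun j h => dif_pos h
  have hΩge : ∀ j, K ≤ j → Ω j = ∅ := fun j h => dif_neg (by omega)
  have hgetmem : ∀ (j) (h : j < K), L.get ⟨j, h⟩ ∈ L := fun j h => L.get_mem ⟨j, h⟩
  -- disjointness
  have hdisj : ∀ j j', j ≠ j' → Disjoint (Ω j) (Ω j') := by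
    have key : ∀ j j', j < j' → Disjoint (Ω j) (Ω j') := by
      intro j j' hjj
      by_cases h' : j' < K
      · have h : j < K := lt_trans hjj h'
        rw [hΩlt j h, hΩlt j' h', List.disjoint_toFinset_iff_disjoint]
        exact List.pairwise_iff_get.mp hnodupL.2 ⟨j, h⟩ ⟨j', h'⟩ (by simpa using hjj)
      · rw [hΩge j' (by omega)]; exact Finset.disjoint_empty_right _
    intro j j' hjj
    rcases lt_or_gt_of_ne hjj with h | h
    · exact key _ _ h
    · exact (key _ _ h).symm
  -- union
  have hunion : (Finset.range K).biUnion Ω = Sᶜ := by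
    ext i
    simp only [Finset.mem_biUnion, Finset.mem_range]
    constructor
    · rintro ⟨j, hj, hi⟩
      rw [hΩlt j hj, List.mem_toFinset] at hi
      have : i ∈ L.flatten := List.mem_flatten.mpr ⟨_, hgetmem j hj, hi⟩
      rw [hjoin] at this
      exact (hmeml i).mp this
    · intro hi
      have h2 : i ∈ L.flatten := hjoin ▸ (hmeml i).mpr hi
      rcases List.mem_flatten.mp h2 with ⟨c, hc, hic⟩
      rcases List.mem_iff_get.mp hc with ⟨⟨j, hj⟩, hgc⟩
      exact ⟨j, hj, by rw [hΩlt j hj, List.mem_toFinset, hgc]; exact hic⟩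
  -- weights
  have hweight : ∀ j < K, ∑ i ∈ Ω j, ω i ^ 2 ≤ lam := by
    intro j hj
    rw [hΩlt j hj, List.sum_toFinset _ (hnodupL.1 _ (hgetmem j hj))]
    exact hws _ (hgetmem j hj)
  -- nonempty
  have hnonempty : ∀ j < K, (Ω j).Nonempty := by
    intro j hj
    rw [hΩlt j hj, List.toFinset_nonempty_iff]
    exact hne _ (hgetmem j hj)
  -- key inequality
  have hkey : ∀ j, 1 ≤ j → j < K →
      Real.sqrt (∑ i ∈ Ω j, ‖x i‖ ^ 2) ≤
        1 / Real.sqrt lam * ∑ i ∈ Ω (j - 1) ∪ Ω j, ‖x i‖ * ω i := by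
    intro j hj1 hjK
    obtain ⟨i, rfl⟩ : ∃ i, j = i + 1 := ⟨j - 1, by omega⟩
    have hiK : i < K := by omega
    simp only [Nat.add_sub_cancel]
    rw [hΩlt i hiK, hΩlt (i + 1) hjK]
    set A := L.get ⟨i, hiK⟩ with hAdef
    set B := L.get ⟨i + 1, hjK⟩ with hBdef
    obtain ⟨e, B', hBe⟩ := List.exists_cons_of_ne_nil (hne _ (hgetmem (i + 1) hjK))
    rw [← hBdef] at hBe
    have hmax : lam < Stmt18Aux.wsum ω A + ω e ^ 2 := by
      have h2 : ∀ e ∈ (L.get ⟨i + 1, hjK⟩).head?, lam < Stmt18Aux.wsum ω (L.get ⟨i, hiK⟩) + ω e ^ 2 :=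
          List.isChain_iff_getElem.mp hchain i (by omega)
      refine h2 e ?_
      have hh : B.head? = some e := by rw [hBe]; rfl
      rw [← hBdef]
      exact hh
    have hein : e ∈ B := by rw [hBe]; simp
    have hel : e ∈ l := by
      rw [← hjoin]
      exact List.mem_flatten.mpr ⟨B, hgetmem _ hjK, hein⟩
    have hlam1 : (1 : ℝ) ≤ lam := le_trans (by nlinarith [hω e]) (hfit e hel)
    have hlam0 : (0 : ℝ) < lam := by linarith
    have hABdisj : Disjoint A.toFinset B.toFinset := by
      rw [List.disjoint_toFinset_iff_disjoint]
      exact List.pairwise_iff_get.mp hnodupL.2 ⟨i, hiK⟩ ⟨i + 1, hjK⟩ (by simp)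
    have hfB : ∀ b ∈ B, f b ≤ f e := by
      have hp := hpairR.1 B (hgetmem _ hjK)
      rw [hBe, List.pairwise_cons] at hp
      intro b hb
      rw [hBe, List.mem_cons] at hb
      rcases hb with rfl | hb
      · exact le_rfl
      · exact hp.1 b hb
    have hfA : ∀ a ∈ A, f e ≤ f a := by
      intro a ha
      have := List.pairwise_iff_get.mp hpairR.2 ⟨i, hiK⟩ ⟨i + 1, hjK⟩ (by simp)
      exact this a ha e hein
    have ht0 : 0 ≤ f e := div_nonneg (norm_nonneg _) (hω0 e).le
    have hM0 : 0 ≤ ∑ i ∈ A.toFinset ∪ B.toFinset, ‖x i‖ * ω i :=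
      Finset.sum_nonneg fun i _ => hxnn i
    have hsum_union : ∑ i ∈ A.toFinset ∪ B.toFinset, ‖x i‖ * ω i =
        (∑ i ∈ A.toFinset, ‖x i‖ * ω i) + ∑ i ∈ B.toFinset, ‖x i‖ * ω i :=
      Finset.sum_union hABdisj
    have hwsA : Stmt18Aux.wsum ω A = ∑ a ∈ A.toFinset, ω a ^ 2 := by
      rw [List.sum_toFinset _ (hnodupL.1 _ (hgetmem i hiK))]
      rfl
    have hstep1 : ∑ b ∈ B.toFinset, ‖x b‖ ^ 2 ≤ f e * ∑ b ∈ B.toFinset, ‖x b‖ * ω b := by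
      rw [Finset.mul_sum]
      refine Finset.sum_le_sum fun b hb => ?_
      have hbB : b ∈ B := List.mem_toFinset.mp hb
      have h1 : ‖x b‖ ^ 2 = f b * (‖x b‖ * ω b) := by
        simp only [hf]
        field_simp [(hω0 b).ne']
      rw [h1]
      exact mul_le_mul_of_nonneg_right (hfB b hbB) (hxnn b)
    have hstep2 : ∑ b ∈ B.toFinset, ‖x b‖ * ω b ≤
        ∑ i ∈ A.toFinset ∪ B.toFinset, ‖x i‖ * ω i :=
      Finset.sum_le_sum_of_subset_of_nonneg Finset.subset_union_right fun i _ _ => hxnn i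
    have hstep3 : f e * lam ≤ ∑ i ∈ A.toFinset ∪ B.toFinset, ‖x i‖ * ω i := by
      have e1 : f e * Stmt18Aux.wsum ω A ≤ ∑ a ∈ A.toFinset, ‖x a‖ * ω a := by
        rw [hwsA, Finset.mul_sum]
        refine Finset.sum_le_sum fun a ha => ?_
        have haA : a ∈ A := List.mem_toFinset.mp ha
        have h1 : ‖x a‖ * ω a = f a * ω a ^ 2 := by
          simp only [hf]
          field_simp [(hω0 a).ne']
        rw [h1]
        exact mul_le_mul_of_nonneg_right (hfA a haA) (by positivity)
      have e2 : f e * ω e ^ 2 ≤ ∑ b ∈ B.toFinset, ‖x b‖ * ω b := by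
        have h1 : f e * ω e ^ 2 = ‖x e‖ * ω e := by
          simp only [hf]
          field_simp [(hω0 e).ne']
        rw [h1]
        exact Finset.single_le_sum (fun i _ => hxnn i) (List.mem_toFinset.mpr hein)
      calc f e * lam ≤ f e * (Stmt18Aux.wsum ω A + ω e ^ 2) :=
            mul_le_mul_of_nonneg_left hmax.le ht0
        _ = f e * Stmt18Aux.wsum ω A + f e * ω e ^ 2 := by ring
        _ ≤ (∑ a ∈ A.toFinset, ‖x a‖ * ω a) + ∑ b ∈ B.toFinset, ‖x b‖ * ω b :=
            add_le_add e1 e2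
        _ = ∑ i ∈ A.toFinset ∪ B.toFinset, ‖x i‖ * ω i := hsum_union.symm
    have hSB : ∑ b ∈ B.toFinset, ‖x b‖ ^ 2 ≤
        (1 / Real.sqrt lam * ∑ i ∈ A.toFinset ∪ B.toFinset, ‖x i‖ * ω i) ^ 2 := by
      have hsq : (1 / Real.sqrt lam * ∑ i ∈ A.toFinset ∪ B.toFinset, ‖x i‖ * ω i) ^ 2 =
          (∑ i ∈ A.toFinset ∪ B.toFinset, ‖x i‖ * ω i) ^ 2 / lam := by
        rw [mul_pow, div_pow, one_pow, Real.sq_sqrt hlam0.le]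
        ring
      rw [hsq]
      have htM : f e ≤ (∑ i ∈ A.toFinset ∪ B.toFinset, ‖x i‖ * ω i) / lam := by
        rw [le_div_iff₀ hlam0]
        exact hstep3
      calc ∑ b ∈ B.toFinset, ‖x b‖ ^ 2 ≤ f e * ∑ b ∈ B.toFinset, ‖x b‖ * ω b := hstep1
        _ ≤ f e * ∑ i ∈ A.toFinset ∪ B.toFinset, ‖x i‖ * ω i :=
            mul_le_mul_of_nonneg_left hstep2 ht0
        _ ≤ ((∑ i ∈ A.toFinset ∪ B.toFinset, ‖x i‖ * ω i) / lam) *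
              ∑ i ∈ A.toFinset ∪ B.toFinset, ‖x i‖ * ω i :=
            mul_le_mul_of_nonneg_right htM hM0
        _ = (∑ i ∈ A.toFinset ∪ B.toFinset, ‖x i‖ * ω i) ^ 2 / lam := by ring
    calc Real.sqrt (∑ b ∈ B.toFinset, ‖x b‖ ^ 2) ≤
          Real.sqrt ((1 / Real.sqrt lam * ∑ i ∈ A.toFinset ∪ B.toFinset, ‖x i‖ * ω i) ^ 2) :=
          Real.sqrt_le_sqrt hSB
      _ = 1 / Real.sqrt lam * ∑ i ∈ A.toFinset ∪ B.toFinset, ‖x i‖ * ω i :=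
          Real.sqrt_sq (mul_nonneg (by positivity) hM0)
  -- final sum
  have hfinal : ∑ j ∈ Finset.Ico 1 K, ∑ i ∈ Ω (j - 1) ∪ Ω j, ‖x i‖ * ω i ≤
      2 * ∑ i, ‖x i‖ * ω i := by
    have hg0 : ∀ j, 0 ≤ ∑ i ∈ Ω j, ‖x i‖ * ω i := fun j => Finset.sum_nonneg fun i _ => hxnn i
    have hsplit : ∀ j ∈ Finset.Ico 1 K, ∑ i ∈ Ω (j - 1) ∪ Ω j, ‖x i‖ * ω i =
        (∑ i ∈ Ω (j - 1), ‖x i‖ * ω i) + ∑ i ∈ Ω j, ‖x i‖ * ω i := by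
      intro j hj
      rw [Finset.mem_Ico] at hj
      exact Finset.sum_union (hdisj _ _ (by omega))
    rw [Finset.sum_congr rfl hsplit, Finset.sum_add_distrib]
    have hT : ∑ j ∈ Finset.range K, ∑ i ∈ Ω j, ‖x i‖ * ω i = ∑ i ∈ Sᶜ, ‖x i‖ * ω i := by
      rw [← hunion, Finset.sum_biUnion]
      exact fun a _ b _ hab => hdisj a b hab
    have hSc : ∑ i ∈ Sᶜ, ‖x i‖ * ω i ≤ ∑ i, ‖x i‖ * ω i :=
      Finset.sum_le_sum_of_subset_of_nonneg (Finset.subset_univ _) fun i _ _ => hxnn i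
    have h1 : ∑ j ∈ Finset.Ico 1 K, ∑ i ∈ Ω (j - 1), ‖x i‖ * ω i ≤
        ∑ i ∈ Sᶜ, ‖x i‖ * ω i := by
      rw [Finset.sum_Ico_eq_sum_range]
      simp only [Nat.add_sub_cancel_left]
      calc ∑ j ∈ Finset.range (K - 1), ∑ i ∈ Ω j, ‖x i‖ * ω i ≤
            ∑ j ∈ Finset.range K, ∑ i ∈ Ω j, ‖x i‖ * ω i :=
            Finset.sum_le_sum_of_subset_of_nonneg
              (Finset.range_subset_range.mpr (by omega)) fun j _ _ => hg0 j
        _ = ∑ i ∈ Sᶜ, ‖x i‖ * ω i := hT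
    have h2 : ∑ j ∈ Finset.Ico 1 K, ∑ i ∈ Ω j, ‖x i‖ * ω i ≤
        ∑ i ∈ Sᶜ, ‖x i‖ * ω i := by
      calc ∑ j ∈ Finset.Ico 1 K, ∑ i ∈ Ω j, ‖x i‖ * ω i ≤
            ∑ j ∈ Finset.range K, ∑ i ∈ Ω j, ‖x i‖ * ω i :=
            Finset.sum_le_sum_of_subset_of_nonneg
              (by intro j hj; rw [Finset.mem_Ico] at hj; exact Finset.mem_range.mpr hj.2)
              fun j _ _ => hg0 j
        _ = ∑ i ∈ Sᶜ, ‖x i‖ * ω i := hT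
    linarith
  exact ⟨K, Ω, hnonempty, hΩge, hdisj, hunion, hweight, hkey, hfinal⟩
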